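/- Let D be an integral domain and let E be the subring D + D^(ℕ) of D^ℕ consisting of sequences that are eventually constant. Then the poset of idempotents of E does not satisfy the descending chain condition, but it has deviation equal to 1. -/

import Mathlib

universe v

/-- `DevLE S o` : the subposet `S` of `P` has deviation at most `o` (deviation `-1`, i.e.
`S` discrete, is allowed). -/
def DevLE {P : Type*} [Preorder P] (S : Set P) (o : Ordinal.{v}) : Prop :=
  ∀ f : ℕ → P, (∀ n, f n ∈ S) → (∀ n, f (n + 1) ≤ f n) →
    ∃ N : ℕ, ∀ n ≥ N,
      (∀ a ∈ S ∩ Set.Icc (f (n + 1)) (f n), ∀ b ∈ S ∩ Set.Icc (f (n + 1)) (f n),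
        a ≤ b → a = b) ∨
      ∃ o' : Ordinal.{v}, ∃ _ : o' < o, DevLE (S ∩ Set.Icc (f (n + 1)) (f n)) o'
termination_by o

/-- The subring `D + D^(ℕ)` of `D^ℕ` of eventually constant sequences. -/
def EvConstSubring (D : Type*) [CommRing D] : Subring (ℕ → D) where
  carrier := {f | ∃ N : ℕ, ∃ c : D, ∀ n ≥ N, f n = c}
  zero_mem' := ⟨0, 0, fun _ _ => rfl⟩
  one_mem' := ⟨0, 1, fun _ _ => rfl⟩
  add_mem' := by
    rintro f g ⟨N₁, c₁, h₁⟩ ⟨N₂, c₂, h₂⟩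
    exact ⟨max N₁ N₂, c₁ + c₂, fun n hn => by
      simp [Pi.add_apply, h₁ n (le_trans (le_max_left _ _) hn),
        h₂ n (le_trans (le_max_right _ _) hn)]⟩
  mul_mem' := by
    rintro f g ⟨N₁, c₁, h₁⟩ ⟨N₂, c₂, h₂⟩
    exact ⟨max N₁ N₂, c₁ * c₂, fun n hn => by
      simp [Pi.mul_apply, h₁ n (le_trans (le_max_left _ _) hn),
        h₂ n (le_trans (le_max_right _ _) hn)]⟩
  neg_mem' := by
    rintro f ⟨N, c, h⟩
    exact ⟨N, -c, fun n hn => by simp [Pi.neg_apply, h n hn]⟩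

/-- The poset of idempotents of a ring, ordered by `e ≤ e'` iff `e * e' = e = e' * e`. -/
def IdemPoset (E : Type*) [Ring E] : Type _ := {e : E // IsIdempotentElem e}

instance (E : Type*) [Ring E] : PartialOrder (IdemPoset E) where
  le e f := e.1 * f.1 = e.1 ∧ f.1 * e.1 = e.1
  le_refl e := ⟨e.2, e.2⟩
  le_trans e f g h h' := by
    obtain ⟨h1, h2⟩ := h
    obtain ⟨h3, h4⟩ := h'
    constructor
    · calc e.1 * g.1 = (e.1 * f.1) * g.1 := by rw [h1]
        _ = e.1 * (f.1 * g.1) := by rw [mul_assoc]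
        _ = e.1 * f.1 := by rw [h3]
        _ = e.1 := h1
    · calc g.1 * e.1 = g.1 * (f.1 * e.1) := by rw [h2]
        _ = (g.1 * f.1) * e.1 := by rw [mul_assoc]
        _ = f.1 * e.1 := by rw [h4]
        _ = e.1 := h2
  le_antisymm e f h h' := by
    obtain ⟨h1, h2⟩ := h
    obtain ⟨h3, h4⟩ := h'
    exact Subtype.ext (h2.symm.trans h3)


section Aux

set_option linter.unusedSectionVars false

variable {D : Type*} [CommRing D] [IsDomain D]

private lemma idem_cases (e : IdemPoset (EvConstSubring D)) (n : ℕ) :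
    e.1.1 n = 0 ∨ e.1.1 n = 1 := by
  have h : e.1.1 n * e.1.1 n = e.1.1 n := congrFun (congrArg Subtype.val e.2) n
  have h0 : e.1.1 n * (e.1.1 n - 1) = 0 := by rw [mul_sub, h]; ring
  rcases mul_eq_zero.mp h0 with h' | h'
  · exact Or.inl h'
  · exact Or.inr (sub_eq_zero.mp h')

private lemma le_iff' {e f : IdemPoset (EvConstSubring D)} :
    e ≤ f ↔ ∀ n, e.1.1 n * f.1.1 n = e.1.1 n := by
  constructor
  · intro h n
    exact congrFun (congrArg Subtype.val h.1) n
  · intro h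
    have h1 : e.1 * f.1 = e.1 := Subtype.ext (funext h)
    exact ⟨h1, by rw [mul_comm]; exact h1⟩

private lemma le_one_imp {e f : IdemPoset (EvConstSubring D)} (h : e ≤ f) (n : ℕ)
    (h1 : e.1.1 n = 1) : f.1.1 n = 1 := by
  have := le_iff'.mp h n
  rw [h1, one_mul] at this
  exact this

private lemma le_zero_imp {e f : IdemPoset (EvConstSubring D)} (h : e ≤ f) (n : ℕ)
    (h1 : f.1.1 n = 0) : e.1.1 n = 0 := by
  have := le_iff'.mp h n
  rw [h1, mul_zero] at this
  exact this.symm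

private lemma eq_iff' {e f : IdemPoset (EvConstSubring D)} :
    e = f ↔ ∀ n, e.1.1 n = f.1.1 n := by
  constructor
  · intro h n; rw [h]
  · intro h; exact Subtype.ext (Subtype.ext (funext h))

/-- The indicator of `[n, ∞)` as an idempotent of the eventually constant subring. -/
private def step (D : Type*) [CommRing D] [IsDomain D] (n : ℕ) :
    IdemPoset (EvConstSubring D) :=
  ⟨⟨fun k => if n ≤ k then 1 else 0, ⟨n, 1, fun k hk => if_pos hk⟩⟩,
    Subtype.ext (funext fun k => by by_cases h : n ≤ k <;> simp [h])⟩

private lemma step_lt (n : ℕ) : step D (n + 1) < step D n := by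
  have hle : step D (n + 1) ≤ step D n := by
    rw [le_iff']
    intro k
    show (if n + 1 ≤ k then (1:D) else 0) * (if n ≤ k then 1 else 0) =
      (if n + 1 ≤ k then (1:D) else 0)
    by_cases h : n + 1 ≤ k
    · rw [if_pos h, if_pos (le_trans (Nat.le_succ n) h), one_mul]
    · rw [if_neg h, zero_mul]
  refine lt_of_le_of_ne hle (fun heq => ?_)
  have := eq_iff'.mp heq n
  simp only [step] at this
  rw [if_neg (Nat.not_succ_le_self n), if_pos (le_refl n)] at this
  exact zero_ne_one this

/-- Intervals whose endpoints eventually agree have deviation at most `0`. -/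
private lemma devle_zero_Icc (a b : IdemPoset (EvConstSubring D)) (K : ℕ)
    (hK : ∀ j ≥ K, a.1.1 j = b.1.1 j) :
    DevLE.{v} ((Set.univ : Set (IdemPoset (EvConstSubring D))) ∩ Set.Icc a b)
      (0 : Ordinal.{v}) := by
  rw [DevLE]
  intro g hgS hg
  classical
  -- outside the window, every element of the chain agrees with `a`
  have tail : ∀ k, ∀ j ≥ K, (g k).1.1 j = a.1.1 j := by
    intro k j hj
    have hga : a ≤ g k := (hgS k).2.1
    have hgb : g k ≤ b := (hgS k).2.2
    rcases idem_cases a j with h0 | h1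
    · rw [h0]
      exact le_zero_imp hgb j (by rw [← hK j hj]; exact h0)
    · rw [h1]
      exact le_one_imp hga j h1
  -- the window supports form a descending chain of finite sets
  set F : ℕ → Finset ℕ := fun k => (Finset.range K).filter (fun j => (g k).1.1 j = 1) with hF
  have hsub : ∀ k, F (k + 1) ⊆ F k := by
    intro k j hj
    simp only [hF, Finset.mem_filter] at hj ⊢
    exact ⟨hj.1, le_one_imp (hg k) j hj.2⟩
  have hanti : ∀ m n, m ≤ n → F n ⊆ F m := by
    intro m n hmn
    induction n with
    | zero => rw [Nat.le_zero.mp hmn]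
    | succ n ih =>
      rcases Nat.lt_or_ge m (n + 1) with h | h
      · exact (hsub n).trans (ih (Nat.lt_succ_iff.mp h))
      · rw [Nat.le_antisymm hmn h]
  -- cardinalities stabilize
  have hne : (Set.range fun k => (F k).card).Nonempty := ⟨(F 0).card, ⟨0, rfl⟩⟩
  obtain ⟨M, hM⟩ := Nat.sInf_mem hne
  have hstab : ∀ k ≥ M, F k = F M := by
    intro k hk
    refine Finset.eq_of_subset_of_card_le (hanti M k hk) ?_
    exact le_trans (le_of_eq hM) (Nat.sInf_le ⟨k, rfl⟩)
  -- hence the chain stabilizes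
  have hconst : ∀ k ≥ M, g (k + 1) = g k := by
    intro k hk
    rw [eq_iff']
    intro j
    rcases Nat.lt_or_ge j K with hjK | hjK
    · rcases idem_cases (g k) j with h0 | h1
      · rw [h0]
        rcases idem_cases (g (k + 1)) j with h0' | h1'
        · exact h0'
        · exfalso
          have hmem : j ∈ F (k + 1) := by
            simp only [hF, Finset.mem_filter]
            exact ⟨Finset.mem_range.mpr hjK, h1'⟩
          have : j ∈ F k := hsub k hmem
          simp only [hF, Finset.mem_filter] at this
          rw [h0] at this
          exact zero_ne_one this.2
      · rw [h1]
        have hmem : j ∈ F k := by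
          simp only [hF, Finset.mem_filter]
          exact ⟨Finset.mem_range.mpr hjK, h1⟩
        rw [hstab k hk, ← hstab (k + 1) (le_trans hk (Nat.le_succ k))] at hmem
        simp only [hF, Finset.mem_filter] at hmem
        exact hmem.2
    · rw [tail (k + 1) j hjK, tail k j hjK]
  refine ⟨M, fun n hn => Or.inl ?_⟩
  intro x hx y hy _
  have hgn : g (n + 1) = g n := hconst n hn
  have hx' : x = g n := le_antisymm hx.2.2 (by rw [← hgn]; exact hx.2.1)
  have hy' : y = g n := le_antisymm hy.2.2 (by rw [← hgn]; exact hy.2.1)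
  rw [hx', hy']

end Aux

/-- For an integral domain `D` and the subring `E = D + D^(ℕ)` of eventually constant
sequences in `D^ℕ`, the poset of idempotents of `E` does not satisfy the descending chain
condition, but it has deviation exactly `1`. -/
theorem evConstSubring_idempotents_no_dcc_dev_one (D : Type*) [CommRing D] [IsDomain D] :
    (∃ f : ℕ → IdemPoset (EvConstSubring D), StrictAnti f) ∧
    DevLE (Set.univ : Set (IdemPoset (EvConstSubring D))) (1 : Ordinal.{v}) ∧
    ¬ DevLE (Set.univ : Set (IdemPoset (EvConstSubring D))) (0 : Ordinal.{v}) := by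
  refine ⟨⟨fun n => step D n, strictAnti_nat_of_succ_lt (fun n => step_lt n)⟩, ?_, ?_⟩
  · -- deviation is at most 1
    rw [DevLE]
    intro f _ hf
    have hchain : ∀ m n, m ≤ n → f n ≤ f m := by
      intro m n hmn
      induction n with
      | zero => rw [Nat.le_zero.mp hmn]
      | succ n ih =>
        rcases Nat.lt_or_ge m (n + 1) with h | h
        · exact (hf n).trans (ih (Nat.lt_succ_iff.mp h))
        · rw [Nat.le_antisymm hmn h]
    -- the tail constants of the chain stabilize
    have key : ∃ N : ℕ, ∀ n ≥ N, ∃ K : ℕ, ∀ j ≥ K, (f (n + 1)).1.1 j = (f n).1.1 j := by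
      by_cases hz : ∃ m N0, ∀ k ≥ N0, (f m).1.1 k = 0
      · obtain ⟨m, N0, h0⟩ := hz
        refine ⟨m, fun n hn => ⟨N0, fun j hj => ?_⟩⟩
        have e1 : (f n).1.1 j = 0 :=
          le_zero_imp (hchain m n hn) j (h0 j hj)
        have e2 : (f (n + 1)).1.1 j = 0 :=
          le_zero_imp (hchain m (n + 1) (le_trans hn (Nat.le_succ n))) j (h0 j hj)
        rw [e1, e2]
      · push_neg at hz
        have hone : ∀ m, ∃ N0, ∀ k ≥ N0, (f m).1.1 k = 1 := by
          intro m
          obtain ⟨N0, c, hc⟩ := (f m).1.2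
          obtain ⟨k, hk, hk0⟩ := hz m N0
          have hck : (f m).1.1 k = c := hc k hk
          rcases idem_cases (f m) k with h0 | h1
          · exact absurd h0 hk0
          · exact ⟨N0, fun j hj => by rw [hc j hj, ← hck, h1]⟩
        refine ⟨0, fun n _ => ?_⟩
        obtain ⟨N1, h1⟩ := hone n
        obtain ⟨N2, h2⟩ := hone (n + 1)
        exact ⟨max N1 N2, fun j hj => by
          rw [h1 j (le_trans (le_max_left _ _) hj), h2 j (le_trans (le_max_right _ _) hj)]⟩
    obtain ⟨N, hN⟩ := key
    refine ⟨N, fun n hn => Or.inr ⟨0, zero_lt_one, ?_⟩⟩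
    obtain ⟨K, hK⟩ := hN n hn
    exact devle_zero_Icc (f (n + 1)) (f n) K hK
  · -- deviation is not at most 0
    intro h
    rw [DevLE] at h
    obtain ⟨N, hN⟩ := h (fun n => step D n) (fun _ => trivial) (fun n => (step_lt n).le)
    rcases hN N le_rfl with hanti | ⟨o', ho', _⟩
    · exact (step_lt N).ne
        (hanti (step D (N + 1)) ⟨trivial, le_rfl, (step_lt N).le⟩
          (step D N) ⟨trivial, (step_lt N).le, le_rfl⟩ (step_lt N).le)
    · exact (not_lt_of_ge (zero_le (a := o'))) ho'
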